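/- arXiv:2306.12228 — 2 statements merged into one kernel-verified Lean document; each statement's English description precedes it below -/
import Mathlib

section
/- Let N, M, T ≥ 1, r > 0, c₁ > 0, let Ω : {1,…,M} → {1,…,N} be injective, and let V ∈ ℂ^{M×T} and Q ∈ ℂ^{N×N}. Assume that the block matrix [[Q, c₁·P_Ω^Adj(V)],[c₁·(P_Ω^Adj(V))ᴴ, I_T]] ∈ ℂ^{(N+T)×(N+T)} is positive semidefinite and that the diagonal sums of Q satisfy d_0(Q) = 1 and d_q(Q) = 0 for all q with 1 ≤ |q| ≤ N−1. Then for every θ ∈ (0,π), ‖(P_Ω^Adj(V))ᴴ·a_r(θ)‖₂ ≤ 1/(c₁·√N). -/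
open Matrix Complex
open scoped ComplexOrder

/-- The Euclidean (`ℓ2`) norm on `ℂ^T`. -/
noncomputable def l2norm {T : ℕ} (u : Fin T → ℂ) : ℝ :=
  Real.sqrt (∑ t, ‖u t‖ ^ 2)

/-- The steering vector `a_r(θ) ∈ ℂ^N`, `(a_r(θ))_l = (1/√N)·exp(−2πi·r·(l−1)·cos θ)`
(0-indexed: `l` runs over `0, …, N-1`). -/
noncomputable def steer (N : ℕ) (r θ : ℝ) : Fin N → ℂ :=
  fun l => (1 / (Real.sqrt N : ℂ)) *
    Complex.exp (-(2 * (Real.pi : ℂ) * Complex.I * (r : ℂ) * ((l : ℕ) : ℂ) * (Real.cos θ : ℂ)))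

/-- The adjoint row-embedding operator `P_Ω^Adj`: the `Ω i`-th row of the result is the `i`-th
row of `V`, and all other rows vanish. -/
noncomputable def PAdj {N M T : ℕ} (Ω : Fin M → Fin N) (V : Matrix (Fin M) (Fin T) ℂ) :
    Matrix (Fin N) (Fin T) ℂ :=
  fun n t => ∑ i : Fin M, if Ω i = n then V i t else 0

/-- The `q`-th diagonal sum `d_q(Q) := ∑_{m - l = q} Q_{l,m}`. -/
noncomputable def diagSum {N : ℕ} (Q : Matrix (Fin N) (Fin N) ℂ) (q : ℤ) : ℂ :=
  ∑ l : Fin N, ∑ m : Fin N, if (m.val : ℤ) - (l.val : ℤ) = q then Q l m else 0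

lemma diag_eval {N : ℕ} (hN : 1 ≤ N) (Q : Matrix (Fin N) (Fin N) ℂ)
    (hd0 : diagSum Q 0 = 1)
    (hdq : ∀ q : ℤ, 1 ≤ |q| → |q| ≤ (N : ℤ) - 1 → diagSum Q q = 0)
    (g : ℤ → ℂ) (hg0 : g 0 = 1) :
    ∑ l : Fin N, ∑ m : Fin N, Q l m * g ((m.val : ℤ) - (l.val : ℤ)) = 1 := by
  have h1 : ∀ l m : Fin N, Q l m * g ((m.val : ℤ) - (l.val : ℤ)) =
      ∑ q ∈ Finset.Icc (1 - (N : ℤ)) ((N : ℤ) - 1),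
        if ((m.val : ℤ) - (l.val : ℤ)) = q then Q l m * g q else 0 := by
    intro l m
    rw [Finset.sum_ite_eq]
    have hmem : ((m.val : ℤ) - (l.val : ℤ)) ∈ Finset.Icc (1 - (N : ℤ)) ((N : ℤ) - 1) := by
      have := m.isLt; have := l.isLt
      simp only [Finset.mem_Icc]; omega
    simp [hmem]
  calc ∑ l : Fin N, ∑ m : Fin N, Q l m * g ((m.val : ℤ) - (l.val : ℤ))
      = ∑ q ∈ Finset.Icc (1 - (N : ℤ)) ((N : ℤ) - 1), diagSum Q q * g q := by
        simp_rw [h1, diagSum, Finset.sum_mul, ite_mul, zero_mul]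
        rw [show (∑ l : Fin N, ∑ m : Fin N, ∑ q ∈ Finset.Icc (1 - (N : ℤ)) ((N : ℤ) - 1),
            if ((m.val : ℤ) - (l.val : ℤ)) = q then Q l m * g q else 0)
          = ∑ l : Fin N, ∑ q ∈ Finset.Icc (1 - (N : ℤ)) ((N : ℤ) - 1), ∑ m : Fin N,
            if ((m.val : ℤ) - (l.val : ℤ)) = q then Q l m * g q else 0
          from Finset.sum_congr rfl (fun l _ => Finset.sum_comm)]
        exact Finset.sum_comm
    _ = 1 := by
        rw [Finset.sum_eq_single 0]
        · rw [hd0, hg0, one_mul]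
        · intro q hq hq0
          simp only [Finset.mem_Icc] at hq
          rw [hdq q (Int.one_le_abs hq0)
            (by rcases abs_cases q with ⟨h, _⟩ | ⟨h, _⟩ <;> omega), zero_mul]
        · intro h0
          exfalso; apply h0; simp only [Finset.mem_Icc]; omega

lemma psd_bound {N T : ℕ} (Q : Matrix (Fin N) (Fin N) ℂ) (C : Matrix (Fin N) (Fin T) ℂ)
    (hpsd : (Matrix.fromBlocks Q C Cᴴ (1 : Matrix (Fin T) (Fin T) ℂ)).PosSemidef)
    (a : Fin N → ℂ) (hQ : star a ⬝ᵥ Q.mulVec a = ((1 : ℂ)/(N : ℂ))) :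
    ∑ t, ‖(Cᴴ.mulVec a) t‖ ^ 2 ≤ 1 / (N : ℝ) := by
  set v := Cᴴ.mulVec a with hv
  have h := hpsd.dotProduct_mulVec_nonneg (Sum.elim a (-v))
  have hx : star (Sum.elim a (-v)) = Sum.elim (star a) (star (-v)) := by
    funext i; cases i <;> simp [Sum.elim]
  rw [Matrix.fromBlocks_mulVec, hx, sumElim_dotProduct_sumElim] at h
  simp only [Sum.elim_comp_inl, Sum.elim_comp_inr, Matrix.mulVec_neg, Matrix.one_mulVec,
    ← hv, dotProduct_add, dotProduct_neg, neg_dotProduct, star_neg,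
    neg_neg, neg_add_cancel, add_zero] at h
  have hvv : star v ⬝ᵥ v = ((∑ t, ‖v t‖ ^ 2 : ℝ) : ℂ) := by
    simp [dotProduct, Pi.star_apply, Complex.star_def, mul_comm,
      Complex.mul_conj', Complex.normSq_eq_norm_sq]
  have hcross : star a ⬝ᵥ C.mulVec v = star v ⬝ᵥ v := by
    rw [dotProduct_mulVec]
    congr 1
    rw [hv, Matrix.star_mulVec, Matrix.conjTranspose_conjTranspose]
  rw [hQ, hcross, hvv] at h
  have hcast : ((1/(N:ℝ) - ∑ t, ‖v t‖ ^ 2 : ℝ) : ℂ)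
      = 1 / (N:ℂ) + -((∑ t, ‖v t‖ ^ 2 : ℝ) : ℂ) := by
    push_cast; ring
  rw [← hcast, Complex.zero_le_real] at h
  linarith

lemma quadform {N : ℕ} (hN : 1 ≤ N) (r θ : ℝ) (Q : Matrix (Fin N) (Fin N) ℂ)
    (hd0 : diagSum Q 0 = 1)
    (hdq : ∀ q : ℤ, 1 ≤ |q| → |q| ≤ (N : ℤ) - 1 → diagSum Q q = 0) :
    star (steer N r θ) ⬝ᵥ Q.mulVec (steer N r θ) = 1 / (N : ℂ) := by
  set K : ℂ := 2 * (Real.pi : ℂ) * Complex.I * (r : ℂ) * (Real.cos θ : ℂ) with hK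
  have key := diag_eval hN Q hd0 hdq (fun q => Complex.exp (-K * (q : ℂ))) (by simp)
  have hN2 : (1/(Real.sqrt N : ℂ)) * (1/(Real.sqrt N : ℂ)) = 1/(N : ℂ) := by
    rw [div_mul_div_comm, one_mul, ← Complex.ofReal_mul,
      Real.mul_self_sqrt (Nat.cast_nonneg N)]
    norm_num
  have hterm : ∀ l m : Fin N, star (steer N r θ) l * (Q l m * steer N r θ m)
      = (1/(N : ℂ)) * (Q l m * Complex.exp (-K * ((((m : ℕ) : ℤ) - ((l : ℕ) : ℤ) : ℤ) : ℂ))) := by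
    intro l m
    have hconj : star (steer N r θ) l = (1 / (Real.sqrt N : ℂ)) * Complex.exp (K * l) := by
      simp only [Pi.star_apply, steer, Complex.star_def, _root_.map_mul, map_div₀,
        _root_.map_one, Complex.conj_ofReal]
      rw [← Complex.exp_conj]
      congr 1
      simp only [map_neg, _root_.map_mul, Complex.conj_ofReal, Complex.conj_I, map_ofNat,
        Complex.conj_natCast]
      rw [hK]; ring_nf
    rw [hconj]
    calc (1 / (Real.sqrt N : ℂ)) * Complex.exp (K * l) * (Q l m * steer N r θ m)
        = ((1/(Real.sqrt N : ℂ)) * (1/(Real.sqrt N : ℂ))) * (Q l m *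
            (Complex.exp (K * l) * Complex.exp (-(2 * (Real.pi : ℂ) * Complex.I * (r : ℂ) *
              ((m : ℕ) : ℂ) * (Real.cos θ : ℂ))))) := by
          simp only [steer]; ring
      _ = (1/(N : ℂ)) * (Q l m * Complex.exp (-K * ((((m : ℕ) : ℤ) - ((l : ℕ) : ℤ) : ℤ) : ℂ))) := by
          rw [hN2, ← Complex.exp_add]
          congr 3
          rw [Int.cast_sub, Int.cast_natCast, Int.cast_natCast]
          ring
  simp only [dotProduct, Matrix.mulVec, Finset.mul_sum]
  calc ∑ l, ∑ m, star (steer N r θ) l * (Q l m * steer N r θ m)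
      = ∑ l, ∑ m, (1/(N : ℂ)) * (Q l m *
          Complex.exp (-K * ((((m : ℕ) : ℤ) - ((l : ℕ) : ℤ) : ℤ) : ℂ))) := by
        exact Finset.sum_congr rfl fun l _ => Finset.sum_congr rfl fun m _ => hterm l m
    _ = (1/(N : ℂ)) * ∑ l, ∑ m, Q l m *
          Complex.exp (-K * ((((m : ℕ) : ℤ) - ((l : ℕ) : ℤ) : ℤ) : ℂ)) := by
        simp_rw [Finset.mul_sum]
    _ = 1 / (N : ℂ) := by rw [key, mul_one]

theorem stmt6 {N M T : ℕ} (hN : 1 ≤ N) (hM : 1 ≤ M) (hT : 1 ≤ T)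
    (r c₁ : ℝ) (hr : 0 < r) (hc₁ : 0 < c₁)
    (Ω : Fin M → Fin N) (hΩ : Function.Injective Ω)
    (V : Matrix (Fin M) (Fin T) ℂ) (Q : Matrix (Fin N) (Fin N) ℂ)
    (hpsd : (Matrix.fromBlocks Q (c₁ • PAdj Ω V) (c₁ • PAdj Ω V)ᴴ
      (1 : Matrix (Fin T) (Fin T) ℂ)).PosSemidef)
    (hd0 : diagSum Q 0 = 1)
    (hdq : ∀ q : ℤ, 1 ≤ |q| → |q| ≤ (N : ℤ) - 1 → diagSum Q q = 0) :
    ∀ θ ∈ Set.Ioo (0 : ℝ) Real.pi,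
      l2norm ((PAdj Ω V)ᴴ.mulVec (steer N r θ)) ≤ 1 / (c₁ * Real.sqrt N) := by
  intro θ hθ
  have hQa := quadform hN r θ Q hd0 hdq
  have hbd := psd_bound Q (c₁ • PAdj Ω V) hpsd (steer N r θ) hQa
  set w := (PAdj Ω V)ᴴ.mulVec (steer N r θ) with hw
  have hveq : (c₁ • PAdj Ω V)ᴴ.mulVec (steer N r θ) = c₁ • w := by
    rw [Matrix.conjTranspose_smul, star_trivial, Matrix.smul_mulVec]
  rw [hveq] at hbd
  have hsum : ∀ t, ‖(c₁ • w) t‖ ^ 2 = c₁ ^ 2 * ‖w t‖ ^ 2 := by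
    intro t
    simp [Pi.smul_apply, norm_smul, mul_pow, abs_of_pos hc₁]
  simp only [hsum, ← Finset.mul_sum] at hbd
  have hNpos : (0 : ℝ) < N := by exact_mod_cast Nat.lt_of_lt_of_le Nat.zero_lt_one hN
  have h2 : ∑ t, ‖w t‖ ^ 2 ≤ 1 / (c₁ ^ 2 * N) := by
    rw [le_div_iff₀ (by positivity)]
    calc (∑ t, ‖w t‖ ^ 2) * (c₁ ^ 2 * N) = (c₁ ^ 2 * ∑ t, ‖w t‖ ^ 2) * N := by ring
      _ ≤ (1 / (N : ℝ)) * N := by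
          apply mul_le_mul_of_nonneg_right hbd hNpos.le
      _ = 1 := by field_simp
  have hsqrt : Real.sqrt (1 / (c₁ ^ 2 * N)) = 1 / (c₁ * Real.sqrt N) := by
    rw [one_div, Real.sqrt_inv, Real.sqrt_mul (sq_nonneg c₁), Real.sqrt_sq hc₁.le, one_div]
  rw [l2norm, ← hsqrt]
  exact Real.sqrt_le_sqrt h2
end

section
/- Let N, T ≥ 1, r > 0, C_e > 0 and W ∈ ℂ^{N×T}. Then the dual atomic norm of W admits the closed form: sup_{A ∈ 𝒜} Re⟨W, A⟩_F = C_e · sup_{θ ∈ (0,π)} ‖Wᴴ·a_r(θ)‖₂. -/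
open Matrix Complex

/-- The Frobenius inner product `⟨A, B⟩_F := trace (Bᴴ * A)`. -/
noncomputable def frobInner {N T : ℕ} (A B : Matrix (Fin N) (Fin T) ℂ) : ℂ :=
  (Bᴴ * A).trace

/-- `‖E‖_{2→2} ≤ C`: the `ℓ2 → ℓ2` operator norm of `E` is at most `C`. -/
def opNormLe {T : ℕ} (E : Matrix (Fin T) (Fin T) ℂ) (C : ℝ) : Prop :=
  ∀ x : Fin T → ℂ, l2norm (E.mulVec x) ≤ C * l2norm x

/-- The atomic set `𝒜 := { a_r(θ)·φᴴ·E : θ ∈ (0,π), ‖φ‖₂ = 1, ‖E‖_{2→2} ≤ C_e }`. -/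
noncomputable def atomicSet (N T : ℕ) (r Ce : ℝ) : Set (Matrix (Fin N) (Fin T) ℂ) :=
  { A | ∃ (θ : ℝ) (φ : Fin T → ℂ) (E : Matrix (Fin T) (Fin T) ℂ),
      θ ∈ Set.Ioo (0 : ℝ) Real.pi ∧ l2norm φ = 1 ∧ opNormLe E Ce ∧
      A = Matrix.vecMulVec (steer N r θ) (star φ) * E }

/- ======================= auxiliary lemmas ======================= -/

lemma aux_l2norm_nonneg {T : ℕ} (u : Fin T → ℂ) : 0 ≤ l2norm u := Real.sqrt_nonneg _

lemma aux_l2norm_sq {T : ℕ} (u : Fin T → ℂ) : l2norm u ^ 2 = ∑ t, ‖u t‖ ^ 2 :=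
  Real.sq_sqrt (Finset.sum_nonneg fun _ _ => sq_nonneg _)

lemma aux_l2norm_smul {T : ℕ} (c : ℝ) (u : Fin T → ℂ) :
    l2norm ((c : ℂ) • u) = |c| * l2norm u := by
  unfold l2norm
  rw [← Real.sqrt_sq_eq_abs, ← Real.sqrt_mul (sq_nonneg c), Finset.mul_sum]
  congr 1
  refine Finset.sum_congr rfl fun t _ => ?_
  simp [norm_mul, mul_pow, Complex.norm_real]

lemma aux_l2norm_pos {T : ℕ} {u : Fin T → ℂ} (h : u ≠ 0) : 0 < l2norm u := by
  rcases Function.ne_iff.1 h with ⟨t, ht⟩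
  have h1 : 0 < ‖u t‖ ^ 2 := pow_pos (norm_pos_iff.2 ht) 2
  have h2 : ‖u t‖ ^ 2 ≤ ∑ s, ‖u s‖ ^ 2 :=
    Finset.single_le_sum (f := fun s => ‖u s‖ ^ 2) (fun s _ => sq_nonneg _) (Finset.mem_univ t)
  exact Real.sqrt_pos.2 (lt_of_lt_of_le h1 h2)

/-- Cauchy–Schwarz for the pairing. -/
lemma aux_re_pair_le {T : ℕ} (φ v : Fin T → ℂ) :
    (∑ s, φ s * (starRingEnd ℂ) (v s)).re ≤ l2norm φ * l2norm v := by
  calc (∑ s, φ s * (starRingEnd ℂ) (v s)).re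
      ≤ ‖∑ s, φ s * (starRingEnd ℂ) (v s)‖ := Complex.re_le_norm _
    _ ≤ ∑ s, ‖φ s * (starRingEnd ℂ) (v s)‖ := norm_sum_le _ _
    _ = ∑ s, ‖φ s‖ * ‖v s‖ := by simp [norm_mul]
    _ ≤ l2norm φ * l2norm v := Real.sum_mul_le_sqrt_mul_sqrt _ _ _

lemma aux_steer_norm {N : ℕ} (hN : 1 ≤ N) (r θ : ℝ) (l : Fin N) :
    ‖steer N r θ l‖ ≤ 1 := by
  show ‖(1 / (Real.sqrt N : ℂ)) *
      Complex.exp (-(2 * (Real.pi : ℂ) * Complex.I * (r : ℂ) * ((l : ℕ) : ℂ) * (Real.cos θ : ℂ)))‖ ≤ 1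
  have hx : (-(2 * (Real.pi : ℂ) * Complex.I * (r : ℂ) * ((l : ℕ) : ℂ) * (Real.cos θ : ℂ)))
      = ((-(2 * Real.pi * r * (l : ℕ) * Real.cos θ) : ℝ) : ℂ) * Complex.I := by
    push_cast; ring
  rw [hx, norm_mul]
  have h2 : ‖Complex.exp (((-(2 * Real.pi * r * (l : ℕ) * Real.cos θ) : ℝ) : ℂ) * Complex.I)‖ = 1 :=
    Complex.norm_exp_ofReal_mul_I _
  rw [h2, mul_one, norm_div]
  simp only [norm_one]
  have hN1 : (1 : ℝ) ≤ Real.sqrt N := by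
    rw [show (1:ℝ) = Real.sqrt 1 by simp]
    exact Real.sqrt_le_sqrt (by exact_mod_cast hN)
  have hpos : (0:ℝ) < ‖((Real.sqrt N : ℝ) : ℂ)‖ := by
    rw [Complex.norm_real, Real.norm_eq_abs, _root_.abs_of_nonneg (Real.sqrt_nonneg _)]
    exact lt_of_lt_of_le one_pos hN1
  rw [div_le_one hpos]
  rw [Complex.norm_real, Real.norm_eq_abs, _root_.abs_of_nonneg (Real.sqrt_nonneg _)]
  exact hN1

/-- The key algebraic identity. -/
lemma aux_frob_eq {N T : ℕ} (W : Matrix (Fin N) (Fin T) ℂ) (a : Fin N → ℂ)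
    (φ : Fin T → ℂ) (E : Matrix (Fin T) (Fin T) ℂ) :
    frobInner W (Matrix.vecMulVec a (star φ) * E) =
      ∑ s, φ s * (starRingEnd ℂ) ((E.mulVec (Wᴴ.mulVec a)) s) := by
  simp only [frobInner, Matrix.trace, Matrix.diag, Matrix.mul_apply,
    Matrix.conjTranspose_apply, Matrix.vecMulVec_apply, Matrix.mulVec, dotProduct,
    Pi.star_apply, map_sum, _root_.map_mul, starRingEnd_apply, star_star, star_sum,
    star_mul', Finset.mul_sum, Finset.sum_mul]
  conv_rhs => rw [Finset.sum_comm]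
  refine Finset.sum_congr rfl fun t _ => ?_
  rw [Finset.sum_comm]
  refine Finset.sum_congr rfl fun s _ => Finset.sum_congr rfl fun n _ => ?_
  ring

/-- Uniform bound on `θ ↦ ‖Wᴴ a_r(θ)‖`. -/
lemma aux_f_bound {N T : ℕ} (hN : 1 ≤ N) (r : ℝ) (W : Matrix (Fin N) (Fin T) ℂ) (θ : ℝ) :
    l2norm (Wᴴ.mulVec (steer N r θ)) ≤ Real.sqrt (∑ t, (∑ n, ‖W n t‖) ^ 2) := by
  unfold l2norm
  apply Real.sqrt_le_sqrt
  apply Finset.sum_le_sum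
  intro t _
  have h1 : ‖(Wᴴ.mulVec (steer N r θ)) t‖ ≤ ∑ n, ‖W n t‖ := by
    calc ‖∑ n, Wᴴ t n * steer N r θ n‖
        ≤ ∑ n, ‖Wᴴ t n * steer N r θ n‖ := norm_sum_le _ _
      _ ≤ ∑ n, ‖W n t‖ := by
          apply Finset.sum_le_sum; intro n _
          rw [norm_mul, Matrix.conjTranspose_apply]
          calc ‖star (W n t)‖ * ‖steer N r θ n‖
              ≤ ‖star (W n t)‖ * 1 :=
                mul_le_mul_of_nonneg_left (aux_steer_norm hN r θ n) (norm_nonneg _)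
            _ = ‖W n t‖ := by rw [mul_one, norm_star]
  calc ‖(Wᴴ.mulVec (steer N r θ)) t‖ ^ 2 ≤ (∑ n, ‖W n t‖) ^ 2 := by
        apply pow_le_pow_left₀ (norm_nonneg _) h1
    _ = _ := rfl

/-- `Ce • 1` has operator norm at most `Ce`. -/
lemma aux_opNorm_smul_one {T : ℕ} {Ce : ℝ} (hCe : 0 < Ce) :
    opNormLe (((Ce : ℂ) • (1 : Matrix (Fin T) (Fin T) ℂ))) Ce := by
  intro x
  rw [Matrix.smul_mulVec, Matrix.one_mulVec, aux_l2norm_smul,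
    _root_.abs_of_nonneg hCe.le]

/-- Attainment: `Ce * f θ` is achieved by an atom. -/
lemma aux_attain {N T : ℕ} (hN : 1 ≤ N) (hT : 1 ≤ T)
    (r Ce : ℝ) (hCe : 0 < Ce) (W : Matrix (Fin N) (Fin T) ℂ)
    {θ : ℝ} (hθ : θ ∈ Set.Ioo (0 : ℝ) Real.pi) :
    Ce * l2norm (Wᴴ.mulVec (steer N r θ)) ∈
      (fun A => (frobInner W A).re) '' atomicSet N T r Ce := by
  set u : Fin T → ℂ := Wᴴ.mulVec (steer N r θ) with hu
  set E : Matrix (Fin T) (Fin T) ℂ := (Ce : ℂ) • 1 with hE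
  have hEu : ∀ v : Fin T → ℂ, E.mulVec v = (Ce : ℂ) • v := by
    intro v; rw [hE, Matrix.smul_mulVec, Matrix.one_mulVec]
  by_cases h0 : u = 0
  · -- value is 0
    refine ⟨Matrix.vecMulVec (steer N r θ)
        (star (fun s : Fin T => if s = ⟨0, hT⟩ then (1:ℂ) else 0)) * E,
      ⟨θ, _, E, hθ, ?_, aux_opNorm_smul_one hCe, rfl⟩, ?_⟩
    · unfold l2norm
      rw [show (∑ t : Fin T, ‖(fun s : Fin T => if s = ⟨0, hT⟩ then (1:ℂ) else 0) t‖ ^ 2) = 1 by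
        rw [Finset.sum_eq_single ⟨0, hT⟩]
        · simp
        · intro b _ hb; simp [hb]
        · simp]
      exact Real.sqrt_one
    · simp only [aux_frob_eq, ← hu, h0, Matrix.mulVec_zero]
      simp [h0, l2norm]
  · -- value is Ce * ‖u‖, attained with φ = u / ‖u‖
    have hc : 0 < l2norm u := aux_l2norm_pos h0
    set c : ℝ := l2norm u with hcdef
    set φ : Fin T → ℂ := ((c⁻¹ : ℝ) : ℂ) • u with hφ
    have hφn : l2norm φ = 1 := by
      rw [hφ, aux_l2norm_smul, _root_.abs_of_nonneg (inv_nonneg.2 hc.le), ← hcdef,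
        inv_mul_cancel₀ hc.ne']
    refine ⟨Matrix.vecMulVec (steer N r θ) (star φ) * E,
      ⟨θ, φ, E, hθ, hφn, aux_opNorm_smul_one hCe, rfl⟩, ?_⟩
    simp only [aux_frob_eq, ← hu, hEu]
    have hval : (∑ s, φ s * (starRingEnd ℂ) (((Ce:ℂ) • u) s))
        = (((c⁻¹ * Ce * ∑ s, ‖u s‖ ^ 2 : ℝ)) : ℂ) := by
      push_cast
      rw [Finset.mul_sum]
      refine Finset.sum_congr rfl fun s _ => ?_
      have huc : u s * (starRingEnd ℂ) (u s) = ((‖u s‖ : ℝ) : ℂ) ^ 2 := by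
        rw [Complex.mul_conj, Complex.normSq_eq_norm_sq]
        push_cast; ring
      simp only [hφ, Pi.smul_apply, smul_eq_mul]
      calc (↑c⁻¹ : ℂ) * u s * (starRingEnd ℂ) ((↑Ce : ℂ) * u s)
          = (↑c⁻¹ : ℂ) * (↑Ce : ℂ) * (u s * (starRingEnd ℂ) (u s)) := by
            rw [_root_.map_mul, Complex.conj_ofReal]; ring
        _ = (↑c)⁻¹ * ↑Ce * (↑‖u s‖ : ℂ) ^ 2 := by rw [huc]; push_cast; ring
    rw [hval, Complex.ofReal_re, ← aux_l2norm_sq u, ← hcdef]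
    field_simp

theorem stmt12 {N T : ℕ} (hN : 1 ≤ N) (hT : 1 ≤ T)
    (r Ce : ℝ) (hr : 0 < r) (hCe : 0 < Ce)
    (W : Matrix (Fin N) (Fin T) ℂ) :
    sSup ((fun A => (frobInner W A).re) '' atomicSet N T r Ce) =
      Ce * sSup ((fun θ => l2norm (Wᴴ.mulVec (steer N r θ))) '' Set.Ioo (0 : ℝ) Real.pi) := by
  set f : ℝ → ℝ := fun θ => l2norm (Wᴴ.mulVec (steer N r θ)) with hf
  set Iset : Set ℝ := f '' Set.Ioo (0 : ℝ) Real.pi with hIset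
  set Sset : Set ℝ := (fun A => (frobInner W A).re) '' atomicSet N T r Ce with hSset
  set M : ℝ := Real.sqrt (∑ t, (∑ n, ‖W n t‖) ^ 2) with hM
  have hfM : ∀ θ, f θ ≤ M := fun θ => aux_f_bound hN r W θ
  have hmem : (Real.pi / 2) ∈ Set.Ioo (0 : ℝ) Real.pi :=
    ⟨by positivity, half_lt_self Real.pi_pos⟩
  have hIne : Iset.Nonempty := ⟨f (Real.pi / 2), ⟨_, hmem, rfl⟩⟩
  have hIbdd : BddAbove Iset := ⟨M, by rintro x ⟨θ, _, rfl⟩; exact hfM θ⟩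
  -- every element of Sset is ≤ Ce * f θ for its θ
  have hSle : ∀ s ∈ Sset, ∃ θ ∈ Set.Ioo (0:ℝ) Real.pi, s ≤ Ce * f θ := by
    rintro s ⟨A, ⟨θ, φ, E, hθ, hφn, hEop, rfl⟩, rfl⟩
    refine ⟨θ, hθ, ?_⟩
    simp only [aux_frob_eq]
    calc (∑ t, φ t * (starRingEnd ℂ) ((E.mulVec (Wᴴ.mulVec (steer N r θ))) t)).re
        ≤ l2norm φ * l2norm (E.mulVec (Wᴴ.mulVec (steer N r θ))) := aux_re_pair_le _ _
      _ = l2norm (E.mulVec (Wᴴ.mulVec (steer N r θ))) := by rw [hφn, one_mul]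
      _ ≤ Ce * f θ := hEop _
  have hSsub : (fun x => Ce * x) '' Iset ⊆ Sset := by
    rintro x ⟨y, ⟨θ, hθ, rfl⟩, rfl⟩
    exact aux_attain hN hT r Ce hCe W hθ
  have hSne : Sset.Nonempty :=
    ⟨Ce * f (Real.pi / 2), hSsub ⟨f (Real.pi / 2), ⟨_, hmem, rfl⟩, rfl⟩⟩
  have hCIbdd : BddAbove ((fun x => Ce * x) '' Iset) := by
    refine ⟨Ce * M, ?_⟩
    rintro x ⟨y, ⟨θ, _, rfl⟩, rfl⟩
    exact mul_le_mul_of_nonneg_left (hfM θ) hCe.le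
  have h1 : sSup Sset = sSup ((fun x => Ce * x) '' Iset) := by
    apply le_antisymm
    · apply csSup_le hSne
      rintro s hs
      obtain ⟨θ, hθ, hsle⟩ := hSle s hs
      exact hsle.trans (le_csSup hCIbdd ⟨f θ, ⟨θ, hθ, rfl⟩, rfl⟩)
    · have hSbdd : BddAbove Sset := by
        refine ⟨Ce * M, ?_⟩
        rintro s hs
        obtain ⟨θ, _, hsle⟩ := hSle s hs
        exact hsle.trans (mul_le_mul_of_nonneg_left (hfM θ) hCe.le)
      exact csSup_le_csSup hSbdd
        ⟨Ce * f (Real.pi / 2), ⟨f (Real.pi / 2), ⟨_, hmem, rfl⟩, rfl⟩⟩ hSsub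
  rw [h1]
  have h2 : (fun x => Ce * x) (sSup Iset) = sSup ((fun x => Ce * x) '' Iset) := by
    apply Monotone.map_csSup_of_continuousAt
    · exact (continuous_const.mul continuous_id).continuousAt
    · exact fun x y h => mul_le_mul_of_nonneg_left h hCe.le
    · exact hIne
    · exact hIbdd
  rw [← h2]
end
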